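/- Let Q > 2 and κ = Q/(Q-2). Suppose (fₘ) is a sequence of nonnegative measurable functions on a measure space and there exist constants c ≥ 1, K ≥ 1 and exponents pₘ = p·κ^m such that (∫ fₘ₊₁)^(1/κ) ≤ c·K^m·∫ fₘ with fₘ = g^(pₘ) for a fixed measurable g. Then sup-norm bound: limsup_m (∫ g^(pₘ))^(1/pₘ) ≤ (cK^A)^(B) (∫ g^p)^(1/p) for constants A, B depending only on κ, i.e. the Moser iteration converges: ess sup g ≤ C (∫ g^p)^(1/p) with C = c^(κ/(p(κ-1))) K^(κ²/(p(κ-1)²)). -/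

import Mathlib

open MeasureTheory Filter Topology

lemma moser_chain (I : ℕ → ℝ) (κ c K : ℝ) (hκ1 : 1 < κ) (hc0 : 0 < c) (hK0 : 0 < K)
    (hI0 : ∀ m, 0 ≤ I m)
    (hit : ∀ m, I (m + 1) ^ (1 / κ) ≤ c * K ^ (m : ℝ) * I m) :
    ∀ m, I m ≤ c ^ ((κ ^ (m + 1) - κ) / (κ - 1)) *
      K ^ ((κ / (κ - 1)) * ((κ ^ m - 1) / (κ - 1) - m)) * I 0 ^ ((κ : ℝ) ^ m) := by
  have hκ0 : (0 : ℝ) < κ := by linarith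
  have hκ1' : (0 : ℝ) < κ - 1 := by linarith
  intro m
  induction m with
  | zero =>
      norm_num
  | succ m ih =>
      have h1 : I (m + 1) ≤ (c * K ^ (m : ℝ) * I m) ^ κ := by
        calc I (m + 1) = (I (m + 1) ^ (1 / κ)) ^ κ := by
              rw [← Real.rpow_mul (hI0 _), one_div, inv_mul_cancel₀ hκ0.ne', Real.rpow_one]
          _ ≤ (c * K ^ (m : ℝ) * I m) ^ κ :=
              Real.rpow_le_rpow (Real.rpow_nonneg (hI0 _) _) (hit m) hκ0.le
      have h2 : (c * K ^ (m : ℝ) * I m) ^ κ ≤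
          (c * K ^ (m : ℝ) * (c ^ ((κ ^ (m + 1) - κ) / (κ - 1)) *
            K ^ ((κ / (κ - 1)) * ((κ ^ m - 1) / (κ - 1) - m)) * I 0 ^ ((κ : ℝ) ^ m))) ^ κ := by
        apply Real.rpow_le_rpow (mul_nonneg (by positivity) (hI0 m)) _ hκ0.le
        apply mul_le_mul_of_nonneg_left ih (by positivity)
      have e1 : (1 + (κ ^ (m + 1) - κ) / (κ - 1)) * κ = (κ ^ (m + 1 + 1) - κ) / (κ - 1) := by
        field_simp
        ring
      have e2 : ((m : ℝ) + (κ / (κ - 1)) * ((κ ^ m - 1) / (κ - 1) - m)) * κ =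
          (κ / (κ - 1)) * ((κ ^ (m + 1) - 1) / (κ - 1) - ((m + 1 : ℕ) : ℝ)) := by
        push_cast
        field_simp
        ring
      have e3 : (κ : ℝ) ^ m * κ = κ ^ (m + 1) := (pow_succ κ m).symm
      have key : (c * K ^ (m : ℝ) * (c ^ ((κ ^ (m + 1) - κ) / (κ - 1)) *
            K ^ ((κ / (κ - 1)) * ((κ ^ m - 1) / (κ - 1) - m)) * I 0 ^ ((κ : ℝ) ^ m))) ^ κ =
          c ^ ((κ ^ (m + 1 + 1) - κ) / (κ - 1)) *
            K ^ ((κ / (κ - 1)) * ((κ ^ (m + 1) - 1) / (κ - 1) - ((m + 1 : ℕ) : ℝ))) *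
            I 0 ^ ((κ : ℝ) ^ (m + 1)) := by
        rw [show c * K ^ (m : ℝ) * (c ^ ((κ ^ (m + 1) - κ) / (κ - 1)) *
            K ^ ((κ / (κ - 1)) * ((κ ^ m - 1) / (κ - 1) - m)) * I 0 ^ ((κ : ℝ) ^ m)) =
            c ^ (1 + (κ ^ (m + 1) - κ) / (κ - 1)) *
            K ^ ((m : ℝ) + (κ / (κ - 1)) * ((κ ^ m - 1) / (κ - 1) - m)) *
            I 0 ^ ((κ : ℝ) ^ m) by
          rw [Real.rpow_add hc0, Real.rpow_add hK0, Real.rpow_one]; ring]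
        rw [Real.mul_rpow (by positivity) (Real.rpow_nonneg (hI0 0) _),
          Real.mul_rpow (by positivity) (by positivity),
          ← Real.rpow_mul hc0.le, ← Real.rpow_mul hK0.le, ← Real.rpow_mul (hI0 0),
          e1, e2, e3]
      exact h1.trans (h2.trans_eq key)


/-- The abstract Moser iteration lemma: a reverse-Hölder chain of integral
inequalities with exponents pₘ = p·κ^m, κ = Q/(Q-2), yields an essential
supremum bound by the L^p norm. -/
theorem moser_iteration
    {α : Type*} [MeasurableSpace α] (μ : Measure α) [IsFiniteMeasure μ]
    (g : α → ℝ) (hg : ∀ x, 0 ≤ g x) (hmeas : Measurable g)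
    (Q p c K κ : ℝ) (hQ : 2 < Q) (hκ : κ = Q / (Q - 2))
    (hp : 0 < p) (hc : 1 ≤ c) (hK : 1 ≤ K)
    (hiter : ∀ m : ℕ,
      (∫ x, g x ^ (p * κ ^ (m + 1)) ∂μ) ^ (1 / κ) ≤
        c * K ^ (m : ℝ) * ∫ x, g x ^ (p * κ ^ m) ∂μ) :
    essSup g μ ≤
      c ^ (κ / (p * (κ - 1))) * K ^ (κ ^ 2 / (p * (κ - 1) ^ 2)) *
        (∫ x, g x ^ p ∂μ) ^ (1 / p) := by
  have hκ1 : 1 < κ := by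
    rw [hκ, lt_div_iff₀ (by linarith)]; linarith
  have hκ0 : (0 : ℝ) < κ := by linarith
  have hκ1' : (0 : ℝ) < κ - 1 := by linarith
  have hc0 : (0 : ℝ) < c := by linarith
  have hK0 : (0 : ℝ) < K := by linarith
  have hI0 : ∀ m : ℕ, 0 ≤ ∫ x, g x ^ (p * κ ^ m) ∂μ := fun m =>
    integral_nonneg fun x => Real.rpow_nonneg (hg x) _
  have hchain := moser_chain (fun m => ∫ x, g x ^ (p * κ ^ m) ∂μ) κ c K hκ1 hc0 hK0 hI0 hiter
  set M : ℝ := c ^ (κ / (p * (κ - 1))) * K ^ (κ ^ 2 / (p * (κ - 1) ^ 2)) *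
      (∫ x, g x ^ p ∂μ) ^ (1 / p) with hMdef
  have hI00 : (∫ x, g x ^ (p * κ ^ (0 : ℕ)) ∂μ) = ∫ x, g x ^ p ∂μ := by
    norm_num
  have hIp0 : 0 ≤ ∫ x, g x ^ p ∂μ :=
    integral_nonneg fun x => Real.rpow_nonneg (hg x) _
  have hM0 : 0 ≤ M := by
    apply mul_nonneg (mul_nonneg (Real.rpow_nonneg hc0.le _) (Real.rpow_nonneg hK0.le _))
    exact Real.rpow_nonneg hIp0 _
  have hκpow : ∀ m : ℕ, (0 : ℝ) < κ ^ m := fun m => pow_pos hκ0 m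
  have hA : ∀ m : ℕ, ((κ ^ (m + 1) - κ) / (κ - 1)) * (1 / (p * κ ^ m)) ≤ κ / (p * (κ - 1)) := by
    intro m
    have h1 : (κ ^ (m + 1) - κ) / (κ - 1) ≤ κ ^ (m + 1) / (κ - 1) := by gcongr; linarith
    calc ((κ ^ (m + 1) - κ) / (κ - 1)) * (1 / (p * κ ^ m))
        ≤ (κ ^ (m + 1) / (κ - 1)) * (1 / (p * κ ^ m)) :=
          mul_le_mul_of_nonneg_right h1 (by positivity)
      _ = κ / (p * (κ - 1)) := by
          rw [pow_succ]
          field_simp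
  have hB : ∀ m : ℕ, ((κ / (κ - 1)) * ((κ ^ m - 1) / (κ - 1) - m)) * (1 / (p * κ ^ m)) ≤
      κ ^ 2 / (p * (κ - 1) ^ 2) := by
    intro m
    have h1 : (κ ^ m - 1) / (κ - 1) - m ≤ κ ^ m / (κ - 1) := by
      have h1a : (κ ^ m - 1) / (κ - 1) ≤ κ ^ m / (κ - 1) := by gcongr; linarith
      have hm : (0 : ℝ) ≤ (m : ℝ) := Nat.cast_nonneg m
      linarith
    have h2 : (κ / (κ - 1)) * ((κ ^ m - 1) / (κ - 1) - m) ≤ (κ / (κ - 1)) * (κ ^ m / (κ - 1)) :=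
      mul_le_mul_of_nonneg_left h1 (by positivity)
    calc ((κ / (κ - 1)) * ((κ ^ m - 1) / (κ - 1) - m)) * (1 / (p * κ ^ m))
        ≤ ((κ / (κ - 1)) * (κ ^ m / (κ - 1))) * (1 / (p * κ ^ m)) :=
          mul_le_mul_of_nonneg_right h2 (by positivity)
      _ = κ / (p * (κ - 1) ^ 2) := by field_simp
      _ ≤ κ ^ 2 / (p * (κ - 1) ^ 2) := by
          gcongr
          nlinarith
  rcases eq_or_ne μ 0 with rfl | hμ0
  · have h1 : essSup g (0 : Measure α) =
        sInf {a : ℝ | ∀ᶠ x in ae (0 : Measure α), g x ≤ a} := Filter.limsup_eq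
    rw [h1]
    have h2 : {a : ℝ | ∀ᶠ x in ae (0 : Measure α), g x ≤ a} = Set.univ := by
      ext a
      simp [ae_zero]
    rw [h2, Real.sInf_of_not_bddBelow]
    · exact hM0
    · rintro ⟨b, hb⟩
      have h3 := hb (Set.mem_univ (b - 1))
      linarith
  by_cases hbdd : ∃ bnd : ℝ, ∀ᵐ x ∂μ, g x ≤ bnd
  · obtain ⟨bnd, hbnd⟩ := hbdd
    have hgB : ∀ᵐ x ∂μ, g x ≤ max bnd 0 := hbnd.mono fun x hx => hx.trans (le_max_left _ _)
    have hInt : ∀ m : ℕ, Integrable (fun x => g x ^ (p * κ ^ m)) μ := by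
      intro m
      have hq : (0 : ℝ) < p * κ ^ m := by positivity
      have hmq : Measurable fun x => g x ^ (p * κ ^ m) :=
        (Real.continuous_rpow_const hq.le).measurable.comp hmeas
      apply (integrable_const ((max bnd 0) ^ (p * κ ^ m))).mono' hmq.aestronglyMeasurable
      filter_upwards [hgB] with x hx
      rw [Real.norm_of_nonneg (Real.rpow_nonneg (hg x) _)]
      exact Real.rpow_le_rpow (hg x) hx hq.le
    have hkey : ∀ t : ℝ, M < t → ∀ᵐ x ∂μ, g x ≤ t := by
      intro t ht
      by_contra hcon
      rw [ae_iff] at hcon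
      have hSS : {x | ¬ g x ≤ t} = {x | t < g x} := by ext x; simp [not_le]
      rw [hSS] at hcon
      have hSm : MeasurableSet {x | t < g x} := measurableSet_lt measurable_const hmeas
      have hδ : 0 < (μ {x | t < g x}).toReal :=
        ENNReal.toReal_pos hcon (measure_ne_top μ _)
      set δ : ℝ := (μ {x | t < g x}).toReal with hδdef
      have ht0 : 0 < t := lt_of_le_of_lt hM0 ht
      have hbound : ∀ m : ℕ, t * δ ^ (1 / (p * κ ^ m)) ≤ M := by
        intro m
        have hq : (0 : ℝ) < p * κ ^ m := by positivity
        have hlow : t ^ (p * κ ^ m) * δ ≤ ∫ x, g x ^ (p * κ ^ m) ∂μ := by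
          have hpt : ∀ x, Set.indicator {x | t < g x} (fun _ => t ^ (p * κ ^ m)) x ≤
              g x ^ (p * κ ^ m) := by
            intro x
            by_cases hx : x ∈ {x | t < g x}
            · rw [Set.indicator_of_mem hx]
              exact Real.rpow_le_rpow ht0.le (le_of_lt hx) hq.le
            · rw [Set.indicator_of_notMem hx]
              exact Real.rpow_nonneg (hg x) _
          have hm2 := integral_mono
            ((integrable_const (t ^ (p * κ ^ m))).indicator hSm) (hInt m) hpt
          rwa [integral_indicator_const _ hSm, smul_eq_mul, mul_comm] at hm2
        have hup := hlow.trans (hchain m)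
        have h2 : (t ^ (p * κ ^ m) * δ) ^ (1 / (p * κ ^ m)) ≤
            (c ^ ((κ ^ (m + 1) - κ) / (κ - 1)) *
              K ^ ((κ / (κ - 1)) * ((κ ^ m - 1) / (κ - 1) - m)) *
              (∫ x, g x ^ (p * κ ^ (0 : ℕ)) ∂μ) ^ ((κ : ℝ) ^ m)) ^ (1 / (p * κ ^ m)) :=
          Real.rpow_le_rpow (mul_nonneg (Real.rpow_nonneg ht0.le _) hδ.le) hup (by positivity)
        rw [Real.mul_rpow (Real.rpow_nonneg ht0.le _) hδ.le,
          ← Real.rpow_mul ht0.le, mul_one_div_cancel hq.ne', Real.rpow_one] at h2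
        rw [Real.mul_rpow (by positivity) (Real.rpow_nonneg (hI0 0) _),
          Real.mul_rpow (by positivity) (by positivity),
          ← Real.rpow_mul hc0.le, ← Real.rpow_mul hK0.le, ← Real.rpow_mul (hI0 0)] at h2
        have e3 : (κ : ℝ) ^ m * (1 / (p * κ ^ m)) = 1 / p := by
          field_simp
        rw [e3, hI00] at h2
        refine h2.trans ?_
        rw [hMdef]
        gcongr <;> first
          | exact hc
          | exact hK
          | exact hA m
          | exact hB m
      have hlim : Tendsto (fun m : ℕ => t * δ ^ (1 / (p * κ ^ m))) atTop (𝓝 t) := by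
        have h1 : Tendsto (fun m : ℕ => p * κ ^ m) atTop atTop :=
          (tendsto_pow_atTop_atTop_of_one_lt hκ1).const_mul_atTop hp
        have h2 : Tendsto (fun m : ℕ => 1 / (p * κ ^ m)) atTop (𝓝 0) := by
          simpa only [one_div, Function.comp_def] using tendsto_inv_atTop_zero.comp h1
        have h3 : Tendsto (fun m : ℕ => δ ^ (1 / (p * κ ^ m))) atTop (𝓝 1) := by
          have heq : ∀ m : ℕ, δ ^ (1 / (p * κ ^ m)) =
              Real.exp (Real.log δ * (1 / (p * κ ^ m))) :=
            fun m => Real.rpow_def_of_pos hδ _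
          simp_rw [heq]
          have h4 := (Real.continuous_exp.tendsto (Real.log δ * 0)).comp
            (h2.const_mul (Real.log δ))
          simpa [Function.comp_def] using h4
        simpa using h3.const_mul t
      have : t ≤ M := le_of_tendsto hlim (Eventually.of_forall hbound)
      linarith
    by_contra hMcon
    push_neg at hMcon
    obtain ⟨t, ht1, ht2⟩ := exists_between hMcon
    have hne : (ae μ).NeBot := ae_neBot.mpr hμ0
    have hle : essSup g μ ≤ t :=
      Filter.limsup_le_of_le (Filter.isCoboundedUnder_le_of_le (ae μ) fun x => hg x)
        (hkey t ht1)
    exact absurd hle (not_le.mpr ht2)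
  · have heq : essSup g μ = sInf {a : ℝ | ∀ᵐ x ∂μ, g x ≤ a} := by
      have : essSup g μ = Filter.limsup g (ae μ) := rfl
      rw [this, Filter.limsup_eq]
    rw [heq]
    have hempty : {a : ℝ | ∀ᵐ x ∂μ, g x ≤ a} = ∅ := by
      rw [Set.eq_empty_iff_forall_notMem]
      intro a ha
      exact hbdd ⟨a, ha⟩
    rw [hempty, Real.sInf_empty]
    exact hM0
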